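/- Let a, b be coprime positive integers with a² + b² > 2, let c(t) = (e^{iat}/√2, e^{ibt}/√2) and γ = {c(t) : t ∈ ℝ} ⊂ ℂ². For each t₀ ∈ ℝ, writing (z₁, z₂) = c(t₀), let R_{t₀} : ℂ² → ℂ² be the ℝ-linear isometry R_{t₀}(w₁, w₂) = (2z₁²·conj(w₁), 2z₂²·conj(w₂)). Then the group of all ℝ-linear isometries A of ℂ² (elements of O(4)) satisfying A(γ) = γ is exactly the subgroup generated by {R_{t₀} : t₀ ∈ ℝ}. -/

import Mathlib

open Complex Polynomial

noncomputable section TorusKnotAux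

/-- `tkE x = e^{ix}`. -/
noncomputable def tkE (x : ℝ) : ℂ := Complex.exp (↑x * Complex.I)

lemma tkE_mul (x y : ℝ) : tkE x * tkE y = tkE (x + y) := by
  simp [tkE, ← Complex.exp_add]; ring_nf

lemma tkE_zero : tkE 0 = 1 := by simp [tkE]

lemma tkE_ne_zero (x : ℝ) : tkE x ≠ 0 := Complex.exp_ne_zero _

lemma tkE_pow (n : ℕ) (t : ℝ) : (tkE t) ^ n = tkE (n * t) := by
  simp only [tkE]
  rw [← Complex.exp_nat_mul]
  congr 1
  push_cast
  ring

lemma tkE_conj (x : ℝ) : (starRingEnd ℂ) (tkE x) = tkE (-x) := by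
  simp [tkE, ← Complex.exp_conj]

lemma tkE_mul_self_conj (x : ℝ) : tkE x * (starRingEnd ℂ) (tkE x) = 1 := by
  rw [tkE_conj, tkE_mul]; simp [tkE_zero]

lemma tk_poly_eq_zero (P : ℂ[X]) (h : ∀ t : ℝ, P.eval (tkE t) = 0) : P = 0 := by
  apply Polynomial.eq_zero_of_infinite_isRoot
  have hinj : Set.InjOn (fun t : ℝ => tkE t) (Set.Ioo 0 1) := by
    intro t ht t' ht' he
    simp only [tkE, Complex.exp_eq_exp_iff_exists_int] at he
    obtain ⟨n, hn⟩ := he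
    have h2 : (t : ℂ) = (t' : ℂ) + n * (2 * Real.pi) := by
      have hI : ((t : ℂ)) * I = ((t' : ℂ) + n * (2*Real.pi)) * I := by
        rw [hn]; ring
      exact mul_right_cancel₀ Complex.I_ne_zero hI
    have h3 : t = t' + n * (2 * Real.pi) := by exact_mod_cast h2
    have hn0 : n = 0 := by
      rcases eq_or_ne n 0 with h0 | h0
      · exact h0
      · exfalso
        have h1 : (1:ℝ) ≤ |(n:ℝ)| := by exact_mod_cast Int.one_le_abs h0
        have hpi := Real.pi_gt_three
        rcases ht with ⟨ht1, ht2⟩; rcases ht' with ⟨ht1', ht2'⟩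
        rcases abs_cases (n:ℝ) with ⟨he1, _⟩ | ⟨he1, _⟩ <;> nlinarith
    rw [hn0] at h3; simpa using h3
  have : ((fun t : ℝ => tkE t) '' Set.Ioo 0 1).Infinite :=
    Set.Infinite.image hinj (Set.Ioo_infinite (by norm_num))
  apply this.mono
  rintro x ⟨t, _, rfl⟩
  exact h t

lemma tk_poly_eq (P Q : ℂ[X]) (h : ∀ t : ℝ, P.eval (tkE t) = Q.eval (tkE t)) : P = Q := by
  have := tk_poly_eq_zero (P - Q) (by intro t; simp [h t])
  exact sub_eq_zero.mp this

lemma tk_coeff_idx_eq {P Q : ℂ[X]} {n : ℕ} (h : P * Q = X ^ n) {i j : ℕ}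
    (hi : P.coeff i ≠ 0) (hj : P.coeff j ≠ 0) : i = j := by
  have hXn : (X ^ n : ℂ[X]) ≠ 0 := pow_ne_zero _ X_ne_zero
  have hP : P ≠ 0 := fun h0 => hXn (by rw [← h, h0, zero_mul])
  have hQ : Q ≠ 0 := fun h0 => hXn (by rw [← h, h0, mul_zero])
  have hd : P.natDegree + Q.natDegree = n := by
    rw [← Polynomial.natDegree_mul hP hQ, h, natDegree_X_pow]
  have ht : P.natTrailingDegree + Q.natTrailingDegree = n := by
    rw [← Polynomial.natTrailingDegree_mul hP hQ, h, natTrailingDegree_X_pow]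
  have h1 := Polynomial.natTrailingDegree_le_natDegree P
  have h2 := Polynomial.natTrailingDegree_le_natDegree Q
  have hi1 := Polynomial.le_natDegree_of_ne_zero hi
  have hi2 := Polynomial.natTrailingDegree_le_of_ne_zero hi
  have hj1 := Polynomial.le_natDegree_of_ne_zero hj
  have hj2 := Polynomial.natTrailingDegree_le_of_ne_zero hj
  omega

lemma tk_key_monomial (a b : ℕ) (ha : 0 < a) (hb : 0 < b) (hne : a ≠ b)
    (u : ℝ → ℂ) (α β δ ε : ℂ)
    (hu : ∀ t : ℝ, u t = α * tkE (a * t) + β * tkE (-(a * t)) + δ * tkE (b * t)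
      + ε * tkE (-(b * t)))
    (hnorm : ∀ t : ℝ, u t * (starRingEnd ℂ) (u t) = 1) :
    (β = 0 ∧ δ = 0 ∧ ε = 0) ∨ (α = 0 ∧ δ = 0 ∧ ε = 0) ∨
    (α = 0 ∧ β = 0 ∧ ε = 0) ∨ (α = 0 ∧ β = 0 ∧ δ = 0) := by
  set P : ℂ[X] := C α * X ^ (2*a+b) + C β * X ^ b + C δ * X ^ (a+2*b) + C ε * X ^ a with hP
  set Q : ℂ[X] := C ((starRingEnd ℂ) β) * X ^ (2*a+b) + C ((starRingEnd ℂ) α) * X ^ b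
      + C ((starRingEnd ℂ) ε) * X ^ (a+2*b) + C ((starRingEnd ℂ) δ) * X ^ a with hQ
  have hPe : ∀ t : ℝ, P.eval (tkE t) = tkE ((a+b) * t) * u t := by
    intro t
    simp only [hP, eval_add, eval_mul, eval_C, eval_pow, eval_X, hu t, tkE_pow]
    rw [mul_add, mul_add, mul_add, mul_comm (tkE _) (α * _), mul_assoc, tkE_mul,
      mul_comm (tkE _) (β * _), mul_assoc, tkE_mul, mul_comm (tkE _) (δ * _), mul_assoc, tkE_mul,
      mul_comm (tkE _) (ε * _), mul_assoc, tkE_mul]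
    push_cast
    ring_nf
  have hQe : ∀ t : ℝ, Q.eval (tkE t) = tkE ((a+b) * t) * (starRingEnd ℂ) (u t) := by
    intro t
    simp only [hQ, eval_add, eval_mul, eval_C, eval_pow, eval_X, hu t, tkE_pow, map_add, map_mul,
      tkE_conj]
    rw [mul_add, mul_add, mul_add, mul_comm (tkE _) (_ * _), mul_assoc, tkE_mul,
      mul_comm (tkE _) (_ * _), mul_assoc, tkE_mul, mul_comm (tkE _) (_ * _), mul_assoc, tkE_mul,
      mul_comm (tkE _) (_ * _), mul_assoc, tkE_mul]
    push_cast
    ring_nf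
  have hPQ : P * Q = X ^ (2*a + 2*b) := by
    apply tk_poly_eq
    intro t
    rw [eval_mul, hPe t, hQe t, eval_pow, eval_X, tkE_pow]
    rw [mul_mul_mul_comm, tkE_mul, hnorm t, mul_one]
    congr 1
    push_cast; ring
  have hcα : P.coeff (2*a+b) = α := by
    have h1 : ¬(2*a+b = b) := by omega
    have h2 : ¬(2*a+b = a+2*b) := by omega
    have h3 : ¬(2*a+b = a) := by omega
    simp only [hP, coeff_add, coeff_C_mul, coeff_X_pow]
    simp [h1, h2, h3, ha.ne', hb.ne']
  have hcβ : P.coeff b = β := by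
    have h1 : ¬(b = 2*a+b) := by omega
    have h2 : ¬(b = a+2*b) := by omega
    have h3 : ¬(b = a) := by omega
    simp only [hP, coeff_add, coeff_C_mul, coeff_X_pow]
    simp [h1, h2, h3, ha.ne', hb.ne']
  have hcδ : P.coeff (a+2*b) = δ := by
    have h1 : ¬(a+2*b = 2*a+b) := by omega
    have h2 : ¬(a+2*b = b) := by omega
    have h3 : ¬(a+2*b = a) := by omega
    simp only [hP, coeff_add, coeff_C_mul, coeff_X_pow]
    simp [h1, h2, h3, ha.ne', hb.ne']
  have hcε : P.coeff a = ε := by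
    have h1 : ¬(a = 2*a+b) := by omega
    have h2 : ¬(a = b) := by omega
    have h3 : ¬(a = a+2*b) := by omega
    simp only [hP, coeff_add, coeff_C_mul, coeff_X_pow]
    simp [h1, h2, h3, ha.ne', hb.ne']
  have huniq : ∀ i j : ℕ, P.coeff i ≠ 0 → P.coeff j ≠ 0 → i = j :=
    fun i j hi hj => tk_coeff_idx_eq hPQ hi hj
  by_cases hα : α = 0
  · by_cases hβ : β = 0
    · by_cases hδ : δ = 0
      · right; right; right
        exact ⟨hα, hβ, hδ⟩
      · right; right; left
        refine ⟨hα, hβ, ?_⟩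
        by_contra hε
        have := huniq (a+2*b) a (hcδ ▸ hδ) (hcε ▸ hε); omega
    · right; left
      refine ⟨hα, ?_, ?_⟩
      · by_contra hδ
        have := huniq b (a+2*b) (hcβ ▸ hβ) (hcδ ▸ hδ); omega
      · by_contra hε
        have := huniq b a (hcβ ▸ hβ) (hcε ▸ hε); omega
  · left
    refine ⟨?_, ?_, ?_⟩
    · by_contra hβ
      have := huniq (2*a+b) b (hcα ▸ hα) (hcβ ▸ hβ); omega
    · by_contra hδ
      have := huniq (2*a+b) (a+2*b) (hcα ▸ hα) (hcδ ▸ hδ); omega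
    · by_contra hε
      have := huniq (2*a+b) a (hcα ▸ hα) (hcε ▸ hε); omega

lemma tkE_funeq {x y : ℝ} (h : ∀ t : ℝ, tkE (x * t) = tkE (y * t)) : x = y := by
  by_contra hxy
  have hne : x - y ≠ 0 := sub_ne_zero.mpr hxy
  set T := Real.pi / (x - y) with hT
  have h1 : tkE ((x - y) * T) = 1 := by
    have h2 := h T
    have h3 : tkE (x * T) * (starRingEnd ℂ) (tkE (y * T)) = 1 := by
      rw [h2]; exact tkE_mul_self_conj _
    rw [tkE_conj, tkE_mul] at h3
    rw [show (x - y) * T = x * T + -(y * T) by ring]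
    exact h3
  have hsub : (x - y) * T = Real.pi := by
    rw [hT]; field_simp
  rw [hsub] at h1
  simp only [tkE] at h1
  rw [Complex.exp_pi_mul_I] at h1
  norm_num at h1

lemma tk_cross_elim (a b : ℕ) (ha : 0 < a) (hb : 0 < b) (hne : a ≠ b) (k₁ k₂ : ℝ)
    (hk₁ : k₁ = (a:ℝ) ∨ k₁ = -(a:ℝ) ∨ k₁ = (b:ℝ) ∨ k₁ = -(b:ℝ))
    (hk₂ : k₂ = (a:ℝ) ∨ k₂ = -(a:ℝ) ∨ k₂ = (b:ℝ) ∨ k₂ = -(b:ℝ))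
    (h : k₁ * (b:ℝ) = k₂ * (a:ℝ)) :
    (k₁ = (a:ℝ) ∧ k₂ = (b:ℝ)) ∨ (k₁ = -(a:ℝ) ∧ k₂ = -(b:ℝ)) := by
  have ha' : (0:ℝ) < a := by exact_mod_cast ha
  have hb' : (0:ℝ) < b := by exact_mod_cast hb
  have hne' : (a:ℝ) ≠ b := by exact_mod_cast hne
  rcases hk₁ with h1|h1|h1|h1 <;> rcases hk₂ with h2|h2|h2|h2 <;> subst h1 <;> subst h2 <;>
    first
      | (left; exact ⟨rfl, rfl⟩)
      | (right; exact ⟨rfl, rfl⟩)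
      | (exfalso; rcases lt_or_gt_of_ne hne' with h3 | h3 <;> nlinarith [mul_pos ha' hb'])

lemma tk_exists_decomp (L : ℂ × ℂ →ₗ[ℝ] ℂ) : ∃ α β δ ε : ℂ, ∀ w : ℂ × ℂ,
    L w = α * w.1 + β * (starRingEnd ℂ) w.1 + δ * w.2 + ε * (starRingEnd ℂ) w.2 := by
  refine ⟨(L (1,0) - I * L (I,0))/2, (L (1,0) + I * L (I,0))/2,
    (L (0,1) - I * L (0,I))/2, (L (0,1) + I * L (0,I))/2, ?_⟩
  rintro ⟨⟨x, y⟩, ⟨z, v⟩⟩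
  rw [Complex.mk_eq_add_mul_I, Complex.mk_eq_add_mul_I]
  have harg : ((↑x + ↑y*I : ℂ), (↑z + ↑v*I : ℂ))
      = x • ((1:ℂ), (0:ℂ)) + y • (I, 0) + z • ((0:ℂ), (1:ℂ)) + v • ((0:ℂ), I) := by
    simp [Prod.ext_iff, Complex.real_smul]
  conv_lhs => rw [harg]
  simp only [map_add, map_smul, map_mul, Complex.real_smul, map_one, Complex.conj_ofReal,
    Complex.conj_I]
  have hI := Complex.I_mul_I
  linear_combination ((y:ℂ) * L (Complex.I, 0) + (v:ℂ) * L (0, Complex.I)) * hI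

noncomputable def tkcf (θ : ℝ) : ℂ ≃ₗᵢ[ℝ] ℂ := Complex.conjLIE.trans (rotation (Circle.exp θ))

lemma tkcf_apply (θ : ℝ) (z : ℂ) : tkcf θ z = Complex.exp (↑θ * I) * (starRingEnd ℂ) z := by
  simp [tkcf, rotation_apply, Circle.coe_exp]

noncomputable def tkreflLE (θ₁ θ₂ : ℝ) : WithLp 2 (ℂ × ℂ) ≃ₗ[ℝ] WithLp 2 (ℂ × ℂ) :=
  (WithLp.linearEquiv 2 ℝ (ℂ × ℂ)).trans
      (((tkcf θ₁).toLinearEquiv.prodCongr (tkcf θ₂).toLinearEquiv).trans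
        (WithLp.linearEquiv 2 ℝ (ℂ × ℂ)).symm)

noncomputable def tkrefl (θ₁ θ₂ : ℝ) : WithLp 2 (ℂ × ℂ) ≃ₗᵢ[ℝ] WithLp 2 (ℂ × ℂ) :=
  { tkreflLE θ₁ θ₂ with
    norm_map' := by
      intro x
      rw [WithLp.prod_norm_eq_of_L2, WithLp.prod_norm_eq_of_L2]
      rw [show (tkreflLE θ₁ θ₂ x).fst = tkcf θ₁ x.fst from rfl]
      rw [show (tkreflLE θ₁ θ₂ x).snd = tkcf θ₂ x.snd from rfl]
      rw [(tkcf θ₁).norm_map, (tkcf θ₂).norm_map] }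

lemma tkrefl_apply (θ₁ θ₂ : ℝ) (w : ℂ × ℂ) :
    tkrefl θ₁ θ₂ ((WithLp.equiv 2 (ℂ × ℂ)).symm w)
      = (WithLp.equiv 2 (ℂ × ℂ)).symm
          (tkE θ₁ * (starRingEnd ℂ) w.1, tkE θ₂ * (starRingEnd ℂ) w.2) := by
  show (WithLp.equiv 2 (ℂ × ℂ)).symm (tkcf θ₁ w.1, tkcf θ₂ w.2) = _
  rw [tkcf_apply, tkcf_apply]; rfl

end TorusKnotAux


/-- For coprime positive integers `a, b` with `a² + b² > 2`, the group of
all ℝ-linear isometries of `ℂ²` (with the Euclidean structure `WithLp 2 (ℂ × ℂ)`, i.e.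
elements of `O(4)`) preserving the `(a,b)`-torus knot `γ` is exactly the subgroup generated
by the reflections `R_{t₀}(w₁, w₂) = (2z₁² conj w₁, 2z₂² conj w₂)`, `(z₁, z₂) = c t₀`. -/
theorem torus_knot_symmetry_group_eq_closure_of_reflections
    (a b : ℕ) (ha : 0 < a) (hb : 0 < b) (hab : Nat.Coprime a b)
    (hv : 2 < (a : ℝ) ^ 2 + (b : ℝ) ^ 2)
    (c : ℝ → WithLp 2 (ℂ × ℂ))
    (hc : ∀ t : ℝ, c t = (WithLp.equiv 2 (ℂ × ℂ)).symm
      (Complex.exp (((a : ℝ) * t : ℝ) * Complex.I) / Real.sqrt 2,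
       Complex.exp (((b : ℝ) * t : ℝ) * Complex.I) / Real.sqrt 2))
    (γ : Set (WithLp 2 (ℂ × ℂ))) (hγ : γ = Set.range c)
    (Refl : Set (WithLp 2 (ℂ × ℂ) ≃ₗᵢ[ℝ] WithLp 2 (ℂ × ℂ)))
    (hRefl : Refl = {A | ∃ t₀ : ℝ, ∀ w : ℂ × ℂ,
        A ((WithLp.equiv 2 (ℂ × ℂ)).symm w) = (WithLp.equiv 2 (ℂ × ℂ)).symm
          (2 * (Complex.exp (((a : ℝ) * t₀ : ℝ) * Complex.I) / Real.sqrt 2) ^ 2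
              * (starRingEnd ℂ) w.1,
           2 * (Complex.exp (((b : ℝ) * t₀ : ℝ) * Complex.I) / Real.sqrt 2) ^ 2
              * (starRingEnd ℂ) w.2)}) :
    {A : WithLp 2 (ℂ × ℂ) ≃ₗᵢ[ℝ] WithLp 2 (ℂ × ℂ) | A '' γ = γ}
      = ↑(Subgroup.closure Refl) := by
  have hs2 : ((Real.sqrt 2 : ℝ) : ℂ) ≠ 0 := by
    norm_cast
    positivity
  have hne : a ≠ b := by
    intro h
    subst h
    have h1 : a = 1 := by rwa [Nat.Coprime, Nat.gcd_self] at hab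
    subst h1; norm_num at hv
  set eqv := WithLp.equiv 2 (ℂ × ℂ) with heqv
  have hcE : ∀ t : ℝ, c t = eqv.symm (tkE ((a:ℝ)*t) / ((Real.sqrt 2 : ℝ) : ℂ),
      tkE ((b:ℝ)*t) / ((Real.sqrt 2 : ℝ) : ℂ)) := by
    intro t; rw [hc t]; rfl
  have htwo : ∀ x : ℝ, 2 * (Complex.exp (↑x * Complex.I) / (Real.sqrt 2 : ℝ)) ^ 2
      = tkE (2 * x) := by
    intro x
    have h1 : Complex.exp (↑x * Complex.I) ^ 2 = tkE (2*x) := by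
      rw [tkE, ← Complex.exp_nat_mul]; congr 1; push_cast; ring
    rw [div_pow, h1, ← Complex.ofReal_pow, Real.sq_sqrt (by norm_num : (0:ℝ) ≤ 2)]
    push_cast; ring
  -- reflections lie in Refl
  have hReflMem : ∀ θ : ℝ, tkrefl ((a:ℝ)*θ) ((b:ℝ)*θ) ∈ Refl := by
    intro θ
    rw [hRefl]
    refine ⟨θ/2, fun w => ?_⟩
    rw [tkrefl_apply, htwo, htwo]
    have h1 : 2*((a:ℝ)*(θ/2)) = (a:ℝ)*θ := by ring
    have h2 : 2*((b:ℝ)*(θ/2)) = (b:ℝ)*θ := by ring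
    rw [h1, h2]
  -- elements of Refl preserve γ
  have hstab : ∀ A ∈ Refl, A '' γ = γ := by
    rw [hRefl]
    rintro A ⟨t₀, hA⟩
    have hact : ∀ t : ℝ, A (c t) = c (2 * t₀ - t) := by
      intro t
      rw [hcE t, hA, hcE (2*t₀ - t)]
      congr 1
      have e3 : ∀ x : ℝ, (starRingEnd ℂ) (tkE x / ((Real.sqrt 2:ℝ):ℂ))
          = tkE (-x) / ((Real.sqrt 2:ℝ):ℂ) := by
        intro x; rw [map_div₀, tkE_conj, Complex.conj_ofReal]
      refine Prod.ext ?_ ?_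
      · show 2 * (Complex.exp (↑((a:ℝ)*t₀) * Complex.I) / (Real.sqrt 2:ℝ)) ^ 2
            * (starRingEnd ℂ) (tkE ((a:ℝ)*t) / ((Real.sqrt 2:ℝ):ℂ))
          = tkE ((a:ℝ)*(2*t₀-t)) / ((Real.sqrt 2:ℝ):ℂ)
        rw [htwo ((a:ℝ)*t₀), e3, ← mul_div_assoc, tkE_mul,
          show 2*((a:ℝ)*t₀) + -((a:ℝ)*t) = (a:ℝ)*(2*t₀-t) from by ring]
      · show 2 * (Complex.exp (↑((b:ℝ)*t₀) * Complex.I) / (Real.sqrt 2:ℝ)) ^ 2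
            * (starRingEnd ℂ) (tkE ((b:ℝ)*t) / ((Real.sqrt 2:ℝ):ℂ))
          = tkE ((b:ℝ)*(2*t₀-t)) / ((Real.sqrt 2:ℝ):ℂ)
        rw [htwo ((b:ℝ)*t₀), e3, ← mul_div_assoc, tkE_mul,
          show 2*((b:ℝ)*t₀) + -((b:ℝ)*t) = (b:ℝ)*(2*t₀-t) from by ring]
    rw [hγ]
    ext x
    constructor
    · rintro ⟨y, ⟨t, rfl⟩, rfl⟩
      exact ⟨2*t₀ - t, (hact t).symm⟩
    · rintro ⟨t, rfl⟩
      refine ⟨c (2*t₀ - t), ⟨2*t₀ - t, rfl⟩, ?_⟩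
      rw [hact]
      congr 1
      ring
  -- the stabilizer is a subgroup
  let Stab : Subgroup (WithLp 2 (ℂ × ℂ) ≃ₗᵢ[ℝ] WithLp 2 (ℂ × ℂ)) :=
  { carrier := {A | A '' γ = γ}
    one_mem' := by
      show (1 : WithLp 2 (ℂ × ℂ) ≃ₗᵢ[ℝ] WithLp 2 (ℂ × ℂ)) '' γ = γ
      rw [LinearIsometryEquiv.coe_one, Set.image_id]
    mul_mem' := by
      intro A B hA hB
      show (A * B) '' γ = γ
      rw [LinearIsometryEquiv.coe_mul, Set.image_comp]
      rw [show B '' γ = γ from hB]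
      exact hA
    inv_mem' := by
      intro A hA
      show ⇑(A⁻¹) '' γ = γ
      have h1 : ⇑(A⁻¹) = ⇑(A.symm) := by rw [LinearIsometryEquiv.inv_def]
      rw [h1]
      conv_lhs => rw [← show ⇑A '' γ = γ from hA]
      rw [← Set.image_comp]
      rw [show ⇑A.symm ∘ ⇑A = id from A.symm_comp_self, Set.image_id] }
  ext A
  simp only [Set.mem_setOf_eq, SetLike.mem_coe]
  constructor
  · intro hA
    have hmem : ∀ t : ℝ, ∃ s', c s' = A (c t) := by
      intro t
      have h1 : A (c t) ∈ γ := by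
        rw [← hA]
        exact ⟨c t, by rw [hγ]; exact ⟨t, rfl⟩, rfl⟩
      rw [hγ] at h1
      exact h1
    choose s hs using hmem
    set lin := WithLp.linearEquiv 2 ℝ (ℂ × ℂ) with hlin
    set L₁ : ℂ × ℂ →ₗ[ℝ] ℂ :=
      (LinearMap.fst ℝ ℂ ℂ) ∘ₗ (lin.toLinearMap ∘ₗ (A.toLinearEquiv.toLinearMap ∘ₗ lin.symm.toLinearMap)) with hL1d
    set L₂ : ℂ × ℂ →ₗ[ℝ] ℂ :=
      (LinearMap.snd ℝ ℂ ℂ) ∘ₗ (lin.toLinearMap ∘ₗ (A.toLinearEquiv.toLinearMap ∘ₗ lin.symm.toLinearMap)) with hL2d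
    have hA_apply : ∀ w : ℂ × ℂ, A (eqv.symm w) = eqv.symm (L₁ w, L₂ w) := by
      intro w
      rw [show L₁ w = (eqv (A (eqv.symm w))).1 from rfl,
        show L₂ w = (eqv (A (eqv.symm w))).2 from rfl, Prod.mk.eta]
      exact (eqv.symm_apply_apply _).symm
    obtain ⟨α, β, δ, ε, hd₁⟩ := tk_exists_decomp L₁
    obtain ⟨α', β', δ', ε', hd₂⟩ := tk_exists_decomp L₂
    have e3 : ∀ x : ℝ, (starRingEnd ℂ) (tkE x / ((Real.sqrt 2:ℝ):ℂ))
        = tkE (-x) / ((Real.sqrt 2:ℝ):ℂ) := by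
      intro x; rw [map_div₀, tkE_conj, Complex.conj_ofReal]
    have hcomp : ∀ t : ℝ,
        ((tkE ((a:ℝ)* s t) / ((Real.sqrt 2:ℝ):ℂ), tkE ((b:ℝ)*s t) / ((Real.sqrt 2:ℝ):ℂ)) : ℂ × ℂ)
        = (L₁ (tkE ((a:ℝ)*t)/((Real.sqrt 2:ℝ):ℂ), tkE ((b:ℝ)*t)/((Real.sqrt 2:ℝ):ℂ)),
           L₂ (tkE ((a:ℝ)*t)/((Real.sqrt 2:ℝ):ℂ), tkE ((b:ℝ)*t)/((Real.sqrt 2:ℝ):ℂ))) := by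
      intro t
      have e1 : c (s t) = A (eqv.symm (tkE ((a:ℝ)*t)/((Real.sqrt 2:ℝ):ℂ),
          tkE ((b:ℝ)*t)/((Real.sqrt 2:ℝ):ℂ))) := by
        rw [hs t, hcE t]
      rw [hcE (s t), hA_apply] at e1
      exact eqv.symm.injective e1
    have h₁ : ∀ t : ℝ, tkE ((a:ℝ) * s t) = α * tkE ((a:ℝ)*t) + β * tkE (-((a:ℝ)*t))
        + δ * tkE ((b:ℝ)*t) + ε * tkE (-((b:ℝ)*t)) := by
      intro t
      have e2 := congrArg Prod.fst (hcomp t)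
      simp only at e2
      rw [hd₁] at e2
      simp only at e2
      rw [e3, e3] at e2
      field_simp at e2
      rw [mul_comm t (b:ℝ)] at e2
      linear_combination e2
    have h₂ : ∀ t : ℝ, tkE ((b:ℝ) * s t) = α' * tkE ((a:ℝ)*t) + β' * tkE (-((a:ℝ)*t))
        + δ' * tkE ((b:ℝ)*t) + ε' * tkE (-((b:ℝ)*t)) := by
      intro t
      have e2 := congrArg Prod.snd (hcomp t)
      simp only at e2
      rw [hd₂] at e2
      simp only at e2
      rw [e3, e3] at e2
      field_simp at e2
      linear_combination e2
    have key₁ := tk_key_monomial a b ha hb hne (fun t => tkE ((a:ℝ) * s t)) α β δ ε h₁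
      (fun t => tkE_mul_self_conj _)
    have key₂ := tk_key_monomial a b ha hb hne (fun t => tkE ((b:ℝ) * s t)) α' β' δ' ε' h₂
      (fun t => tkE_mul_self_conj _)
    have hapos : (0:ℝ) < a := by exact_mod_cast ha
    have hbpos : (0:ℝ) < b := by exact_mod_cast hb
    have hneR : (a:ℝ) ≠ (b:ℝ) := by exact_mod_cast hne
    have pack₁ : ∃ k₁ : ℝ,
        (k₁ = (a:ℝ) ∨ k₁ = -(a:ℝ) ∨ k₁ = (b:ℝ) ∨ k₁ = -(b:ℝ)) ∧
        (∀ t : ℝ, tkE ((a:ℝ) * s t) = tkE ((a:ℝ) * s 0) * tkE (k₁ * t)) ∧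
        (k₁ = (a:ℝ) → ∀ w : ℂ × ℂ, L₁ w = tkE ((a:ℝ) * s 0) * w.1) ∧
        (k₁ = -(a:ℝ) → ∀ w : ℂ × ℂ, L₁ w = tkE ((a:ℝ) * s 0) * (starRingEnd ℂ) w.1) := by
      rcases key₁ with ⟨h1,h2,h3⟩|⟨h1,h2,h3⟩|⟨h1,h2,h3⟩|⟨h1,h2,h3⟩
      · have h0 : tkE ((a:ℝ) * s 0) = α := by
          have h4 := h₁ 0
          simp only [h1, h2, h3, zero_mul, mul_zero, neg_zero, tkE_zero, mul_one, add_zero,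
            zero_add] at h4
          exact h4
        refine ⟨(a:ℝ), Or.inl rfl, ?_, ?_, ?_⟩
        · intro t; rw [h₁ t, h1, h2, h3, h0]; ring
        · intro _ w; rw [hd₁ w, h1, h2, h3, h0]; ring
        · intro hcon; exfalso; linarith
      · have h0 : tkE ((a:ℝ) * s 0) = β := by
          have h4 := h₁ 0
          simp only [h1, h2, h3, zero_mul, mul_zero, neg_zero, tkE_zero, mul_one, add_zero,
            zero_add] at h4
          exact h4
        refine ⟨-(a:ℝ), Or.inr (Or.inl rfl), ?_, ?_, ?_⟩
        · intro t
          rw [h₁ t, h1, h2, h3, h0, show -(a:ℝ)*t = -((a:ℝ)*t) from by ring]; ring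
        · intro hcon; exfalso; linarith
        · intro _ w; rw [hd₁ w, h1, h2, h3, h0]; ring
      · have h0 : tkE ((a:ℝ) * s 0) = δ := by
          have h4 := h₁ 0
          simp only [h1, h2, h3, zero_mul, mul_zero, neg_zero, tkE_zero, mul_one, add_zero,
            zero_add] at h4
          exact h4
        refine ⟨(b:ℝ), Or.inr (Or.inr (Or.inl rfl)), ?_, ?_, ?_⟩
        · intro t; rw [h₁ t, h1, h2, h3, h0]; ring
        · intro hcon; exfalso; exact hneR hcon.symm
        · intro hcon; exfalso; linarith
      · have h0 : tkE ((a:ℝ) * s 0) = ε := by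
          have h4 := h₁ 0
          simp only [h1, h2, h3, zero_mul, mul_zero, neg_zero, tkE_zero, mul_one, add_zero,
            zero_add] at h4
          exact h4
        refine ⟨-(b:ℝ), Or.inr (Or.inr (Or.inr rfl)), ?_, ?_, ?_⟩
        · intro t
          rw [h₁ t, h1, h2, h3, h0, show -(b:ℝ)*t = -((b:ℝ)*t) from by ring]; ring
        · intro hcon; exfalso; linarith
        · intro hcon; exfalso
          have h5 : (a:ℝ) = b := by linarith
          exact hneR h5
    have pack₂ : ∃ k₂ : ℝ,
        (k₂ = (a:ℝ) ∨ k₂ = -(a:ℝ) ∨ k₂ = (b:ℝ) ∨ k₂ = -(b:ℝ)) ∧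
        (∀ t : ℝ, tkE ((b:ℝ) * s t) = tkE ((b:ℝ) * s 0) * tkE (k₂ * t)) ∧
        (k₂ = (b:ℝ) → ∀ w : ℂ × ℂ, L₂ w = tkE ((b:ℝ) * s 0) * w.2) ∧
        (k₂ = -(b:ℝ) → ∀ w : ℂ × ℂ, L₂ w = tkE ((b:ℝ) * s 0) * (starRingEnd ℂ) w.2) := by
      rcases key₂ with ⟨h1,h2,h3⟩|⟨h1,h2,h3⟩|⟨h1,h2,h3⟩|⟨h1,h2,h3⟩
      · have h0 : tkE ((b:ℝ) * s 0) = α' := by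
          have h4 := h₂ 0
          simp only [h1, h2, h3, zero_mul, mul_zero, neg_zero, tkE_zero, mul_one, add_zero,
            zero_add] at h4
          exact h4
        refine ⟨(a:ℝ), Or.inl rfl, ?_, ?_, ?_⟩
        · intro t; rw [h₂ t, h1, h2, h3, h0]; ring
        · intro hcon; exfalso; exact hneR hcon
        · intro hcon; exfalso; linarith
      · have h0 : tkE ((b:ℝ) * s 0) = β' := by
          have h4 := h₂ 0
          simp only [h1, h2, h3, zero_mul, mul_zero, neg_zero, tkE_zero, mul_one, add_zero,
            zero_add] at h4
          exact h4
        refine ⟨-(a:ℝ), Or.inr (Or.inl rfl), ?_, ?_, ?_⟩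
        · intro t
          rw [h₂ t, h1, h2, h3, h0, show -(a:ℝ)*t = -((a:ℝ)*t) from by ring]; ring
        · intro hcon; exfalso; linarith
        · intro hcon; exfalso
          have h5 : (a:ℝ) = b := by linarith
          exact hneR h5
      · have h0 : tkE ((b:ℝ) * s 0) = δ' := by
          have h4 := h₂ 0
          simp only [h1, h2, h3, zero_mul, mul_zero, neg_zero, tkE_zero, mul_one, add_zero,
            zero_add] at h4
          exact h4
        refine ⟨(b:ℝ), Or.inr (Or.inr (Or.inl rfl)), ?_, ?_, ?_⟩
        · intro t; rw [h₂ t, h1, h2, h3, h0]; ring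
        · intro _ w; rw [hd₂ w, h1, h2, h3, h0]; ring
        · intro hcon; exfalso; linarith
      · have h0 : tkE ((b:ℝ) * s 0) = ε' := by
          have h4 := h₂ 0
          simp only [h1, h2, h3, zero_mul, mul_zero, neg_zero, tkE_zero, mul_one, add_zero,
            zero_add] at h4
          exact h4
        refine ⟨-(b:ℝ), Or.inr (Or.inr (Or.inr rfl)), ?_, ?_, ?_⟩
        · intro t
          rw [h₂ t, h1, h2, h3, h0, show -(b:ℝ)*t = -((b:ℝ)*t) from by ring]; ring
        · intro hcon; exfalso; linarith
        · intro _ w; rw [hd₂ w, h1, h2, h3, h0]; ring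
    obtain ⟨k₁, hk₁, hu₁, hrot₁, href₁⟩ := pack₁
    obtain ⟨k₂, hk₂, hu₂, hrot₂, href₂⟩ := pack₂
    have hkk : k₁ * (b:ℝ) = k₂ * (a:ℝ) := by
      apply tkE_funeq
      intro t
      have h0 : (tkE ((a:ℝ) * s t))^b = (tkE ((b:ℝ) * s t))^a := by
        rw [tkE_pow, tkE_pow]; congr 1; ring
      rw [hu₁ t, hu₂ t, mul_pow, mul_pow, tkE_pow, tkE_pow, tkE_pow, tkE_pow] at h0
      rw [show (b:ℝ)*((a:ℝ)*s 0) = (a:ℝ)*((b:ℝ)*s 0) from by ring] at h0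
      have h5 := mul_left_cancel₀ (tkE_ne_zero _) h0
      rw [show k₁*(b:ℝ)*t = (b:ℝ)*(k₁*t) from by ring,
        show k₂*(a:ℝ)*t = (a:ℝ)*(k₂*t) from by ring]
      exact h5
    rcases tk_cross_elim a b ha hb hne k₁ k₂ hk₁ hk₂ hkk with ⟨hk1, hk2⟩ | ⟨hk1, hk2⟩
    · have hL1 := hrot₁ hk1
      have hL2 := hrot₂ hk2
      have hAeq : A = tkrefl ((a:ℝ) * s 0) ((b:ℝ) * s 0) * tkrefl ((a:ℝ) * 0) ((b:ℝ) * 0) := by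
        refine LinearIsometryEquiv.ext fun x => ?_
        have hkey : ∀ w : ℂ × ℂ, A (eqv.symm w)
            = (tkrefl ((a:ℝ)*s 0) ((b:ℝ)*s 0) * tkrefl ((a:ℝ)*0) ((b:ℝ)*0)) (eqv.symm w) := by
          intro w
          rw [hA_apply, hL1, hL2]
          have hmul : (tkrefl ((a:ℝ)*s 0) ((b:ℝ)*s 0) * tkrefl ((a:ℝ)*0) ((b:ℝ)*0)) (eqv.symm w)
              = tkrefl ((a:ℝ)*s 0) ((b:ℝ)*s 0) (tkrefl ((a:ℝ)*0) ((b:ℝ)*0) (eqv.symm w)) := rfl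
          rw [hmul, tkrefl_apply, show (a:ℝ)*0 = 0 from by ring, show (b:ℝ)*0 = 0 from by ring,
            tkE_zero, one_mul, one_mul, tkrefl_apply]
          simp
          rfl
        have h6 := hkey (eqv x)
        rwa [eqv.symm_apply_apply] at h6
      rw [hAeq]
      exact Subgroup.mul_mem _ (Subgroup.subset_closure (hReflMem (s 0)))
        (Subgroup.subset_closure (hReflMem 0))
    · have hL1 := href₁ hk1
      have hL2 := href₂ hk2
      have hAeq : A = tkrefl ((a:ℝ) * s 0) ((b:ℝ) * s 0) := by
        refine LinearIsometryEquiv.ext fun x => ?_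
        have hkey : ∀ w : ℂ × ℂ, A (eqv.symm w)
            = tkrefl ((a:ℝ)*s 0) ((b:ℝ)*s 0) (eqv.symm w) := by
          intro w
          rw [hA_apply, hL1, hL2, tkrefl_apply]
        have h6 := hkey (eqv x)
        rwa [eqv.symm_apply_apply] at h6
      rw [hAeq]
      exact Subgroup.subset_closure (hReflMem (s 0))
  · intro hA
    have hle : Subgroup.closure Refl ≤ Stab :=
      (Subgroup.closure_le Stab).mpr (fun R hR => hstab R hR)
    exact hle hA
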